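/- Bounded mutual information with a uniform independent time index under near-i.i.d. distribution: if TV(P_{(S,X,Ŝ,Y)^n}, P̄^{⊗n}) ≤ ε and T is uniform on {1,…,n} independent of the sequence, then I(S_T, X_T, Ŝ_T, Y_T; T) ≤ f(ε) for a function f with f(ε) → 0 as ε → 0 (explicitly f(ε) = 2√ε(2H(P̄)+δ) + 2δ + δ with δ = ε log(|A|/ε), where A is the single-letter alphabet). -/

import Mathlib

open Finset Real
open scoped Classical BigOperators

/-- Total variation distance (half the L¹ distance). -/
noncomputable def TV {X : Type*} [Fintype X] (P Q : X → ℝ) : ℝ :=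
  (∑ x, |P x - Q x|) / 2

/-- Shannon entropy (natural log). -/
noncomputable def Hent {X : Type*} [Fintype X] (P : X → ℝ) : ℝ :=
  -∑ x, P x * Real.log (P x)

/-- `P` is a probability distribution on a finite type. -/
def IsProb {X : Type*} [Fintype X] (P : X → ℝ) : Prop :=
  (∀ x, 0 ≤ P x) ∧ ∑ x, P x = 1

/-- Pushforward of a distribution along a map. -/
noncomputable def push {X Y : Type*} [Fintype X] (f : X → Y) (P : X → ℝ) : Y → ℝ :=
  fun y => ∑ x, if f x = y then P x else 0

lemma IsProb.le_one {X : Type*} [Fintype X] {p : X → ℝ} (hp : IsProb p) (a : X) : p a ≤ 1 := by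
  rw [← hp.2]
  exact Finset.single_le_sum (fun i _ => hp.1 i) (Finset.mem_univ a)

lemma Hent_nonneg {X : Type*} [Fintype X] {p : X → ℝ} (hp : IsProb p) : 0 ≤ Hent p := by
  unfold Hent
  rw [neg_nonneg]
  apply Finset.sum_nonpos
  intro a _
  exact mul_nonpos_of_nonneg_of_nonpos (hp.1 a) (Real.log_nonpos (hp.1 a) (hp.le_one a))

/-- Pointwise bound: `f(q) - f(p) ≤ (p-q)⁺ + f((q-p)⁺)` for `f x = -x log x`. -/
lemma mul_log_diff_le {p q : ℝ} (hp0 : 0 ≤ p) (hp1 : p ≤ 1) (hq0 : 0 ≤ q) (hq1 : q ≤ 1) :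
    p * Real.log p - q * Real.log q
      ≤ max (p - q) 0 - max (q - p) 0 * Real.log (max (q - p) 0) := by
  rcases le_or_gt q p with hqp | hpq
  · rw [max_eq_left (by linarith), max_eq_right (by linarith)]
    simp only [zero_mul, sub_zero]
    rcases eq_or_lt_of_le hp0 with hp | hp
    · have hq : q = 0 := le_antisymm (by linarith) hq0
      simp [← hp, hq]
    rcases eq_or_lt_of_le hq0 with hq | hq
    · have hlp : Real.log p ≤ 0 := Real.log_nonpos hp0 hp1
      have : p * Real.log p ≤ 0 := mul_nonpos_of_nonneg_of_nonpos hp0 hlp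
      simp [← hq]
      linarith
    · have h1 : Real.log p - Real.log q ≤ p / q - 1 := by
        rw [← Real.log_div (ne_of_gt hp) (ne_of_gt hq)]
        exact Real.log_le_sub_one_of_pos (div_pos hp hq)
      have h2 : Real.log p ≤ 0 := Real.log_nonpos hp0 hp1
      have h3 : q * (Real.log p - Real.log q) ≤ q * (p / q - 1) :=
        mul_le_mul_of_nonneg_left h1 hq0
      have h4 : q * (p / q - 1) = p - q := by field_simp
      have h5 : (p - q) * Real.log p ≤ 0 :=
        mul_nonpos_of_nonneg_of_nonpos (by linarith) h2
      nlinarith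
  · rw [max_eq_right (by linarith), max_eq_left (by linarith)]
    rcases eq_or_lt_of_le hp0 with hp | hp
    · simp [← hp]
    · have h1 : p * Real.log p ≤ p * Real.log q :=
        mul_le_mul_of_nonneg_left (Real.log_le_log hp (le_of_lt hpq)) hp0
      have h2 : (q - p) * Real.log (q - p) ≤ (q - p) * Real.log q :=
        mul_le_mul_of_nonneg_left (Real.log_le_log (by linarith) (by linarith)) (by linarith)
      nlinarith

/-- Pointwise bound: `-s log s ≤ ε/N - s + s log(N/ε)`. -/
lemma neg_mul_log_le {s N ε : ℝ} (hs : 0 ≤ s) (hN : 1 ≤ N) (hε : 0 < ε) :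
    -(s * Real.log s) ≤ ε / N - s + s * Real.log (N / ε) := by
  rcases eq_or_lt_of_le hs with h | h
  · rw [← h]
    simp
    positivity
  · have hN0 : (0 : ℝ) < N := by linarith
    have hx : 0 < ε / (N * s) := by positivity
    have h1 : Real.log (ε / (N * s)) ≤ ε / (N * s) - 1 := Real.log_le_sub_one_of_pos hx
    have hlog : Real.log (ε / (N * s)) = Real.log ε - Real.log N - Real.log s := by
      rw [Real.log_div (ne_of_gt hε) (by positivity), Real.log_mul (ne_of_gt hN0) (ne_of_gt h)]
      ring
    have hlog2 : s * Real.log (N / ε) = s * Real.log N - s * Real.log ε := by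
      rw [Real.log_div (ne_of_gt hN0) (ne_of_gt hε)]; ring
    have h2 : s * Real.log (ε / (N * s)) ≤ s * (ε / (N * s) - 1) :=
      mul_le_mul_of_nonneg_left h1 hs
    have h3 : s * (ε / (N * s) - 1) = ε / N - s := by field_simp
    rw [hlog] at h2
    nlinarith

/-- One-sided Fannes-type continuity of entropy. -/
lemma hent_sub_le {X : Type*} [Fintype X] {p q : X → ℝ} (hp : IsProb p) (hq : IsProb q)
    {ε : ℝ} (hε0 : 0 < ε) (hε1 : ε ≤ 1) (hTV : TV p q ≤ ε) :
    Hent q - Hent p ≤ ε + ε * Real.log ((Fintype.card X : ℝ) / ε) := by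
  have hne : Nonempty X := by
    by_contra hX
    rw [not_nonempty_iff] at hX
    have := hp.2
    rw [Finset.univ_eq_empty, Finset.sum_empty] at this
    norm_num at this
  have hcard : 1 ≤ (Fintype.card X : ℝ) := by exact_mod_cast Fintype.card_pos
  set N : ℝ := (Fintype.card X : ℝ) with hN
  set L : ℝ := Real.log (N / ε) with hL
  have hL0 : 0 ≤ L := Real.log_nonneg (by rw [le_div_iff₀ hε0]; linarith)
  -- the positive and negative parts
  have hsum_rs : ∑ a, max (p a - q a) 0 = ∑ a, max (q a - p a) 0 := by
    have hpt : ∀ a, max (p a - q a) 0 - max (q a - p a) 0 = p a - q a := by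
      intro a
      rcases le_total (p a) (q a) with h | h
      · rw [max_eq_right (by linarith), max_eq_left (by linarith)]; ring
      · rw [max_eq_left (by linarith), max_eq_right (by linarith)]; ring
    have h2 : ∑ a, (max (p a - q a) 0 - max (q a - p a) 0) = 0 := by
      simp only [hpt]
      rw [Finset.sum_sub_distrib, hp.2, hq.2]; ring
    rw [Finset.sum_sub_distrib] at h2
    linarith
  have hs_le : ∑ a, max (q a - p a) 0 ≤ ε := by
    have hmax : ∀ a, max (q a - p a) 0 = (|p a - q a| + (q a - p a)) / 2 := by
      intro a
      rcases le_total (p a) (q a) with h | h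
      · rw [max_eq_left (by linarith), abs_of_nonpos (by linarith)]; ring
      · rw [max_eq_right (by linarith), abs_of_nonneg (by linarith)]; ring
    unfold TV at hTV
    calc ∑ a, max (q a - p a) 0 = ∑ a, (|p a - q a| + (q a - p a)) / 2 := by
          exact Finset.sum_congr rfl fun a _ => hmax a
      _ = ((∑ a, |p a - q a|) + ((∑ a, q a) - ∑ a, p a)) / 2 := by
          rw [← Finset.sum_div, Finset.sum_add_distrib, Finset.sum_sub_distrib]
      _ = (∑ a, |p a - q a|) / 2 := by rw [hp.2, hq.2]; ring
      _ ≤ ε := hTV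
  have key : Hent q - Hent p = ∑ a, (p a * Real.log (p a) - q a * Real.log (q a)) := by
    unfold Hent
    rw [Finset.sum_sub_distrib]; ring
  rw [key]
  have step1 : ∑ a, (p a * Real.log (p a) - q a * Real.log (q a))
      ≤ ∑ a, (max (p a - q a) 0 + (ε / N - max (q a - p a) 0 + max (q a - p a) 0 * L)) := by
    apply Finset.sum_le_sum
    intro a _
    have h1 := mul_log_diff_le (hp.1 a) (hp.le_one a) (hq.1 a) (hq.le_one a)
    have h2 := neg_mul_log_le (le_max_right (q a - p a) 0) hcard hε0
    rw [← hL] at h2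
    linarith
  have step2 : ∑ a, (max (p a - q a) 0 + (ε / N - max (q a - p a) 0 + max (q a - p a) 0 * L))
      = (∑ a, max (p a - q a) 0) + (ε - (∑ a, max (q a - p a) 0)
          + (∑ a, max (q a - p a) 0) * L) := by
    rw [Finset.sum_add_distrib, Finset.sum_add_distrib, Finset.sum_sub_distrib,
      Finset.sum_const, Finset.card_univ, ← Finset.sum_mul]
    have : (Fintype.card X) • (ε / N) = ε := by
      rw [nsmul_eq_mul, hN]
      field_simp
    rw [this]
  rw [step2] at step1
  have hsL : (∑ a, max (q a - p a) 0) * L ≤ ε * L := by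
    apply mul_le_mul_of_nonneg_right hs_le hL0
  rw [hsum_rs] at step1
  linarith

lemma TV_comm {X : Type*} [Fintype X] (P Q : X → ℝ) : TV P Q = TV Q P := by
  unfold TV
  simp [abs_sub_comm]

/-- Data processing for total variation. -/
lemma TV_push_le {X Y : Type*} [Fintype X] [Fintype Y] (f : X → Y) (P Q : X → ℝ) :
    TV (push f P) (push f Q) ≤ TV P Q := by
  unfold TV push
  have : ∑ y, |(∑ x, if f x = y then P x else 0) - ∑ x, if f x = y then Q x else 0|
      ≤ ∑ x, |P x - Q x| := by
    calc ∑ y, |(∑ x, if f x = y then P x else 0) - ∑ x, if f x = y then Q x else 0|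
        = ∑ y, |∑ x, if f x = y then P x - Q x else 0| := by
          apply Finset.sum_congr rfl
          intro y _
          rw [← Finset.sum_sub_distrib]
          congr 1
          apply Finset.sum_congr rfl
          intro x _
          split <;> simp
      _ ≤ ∑ y, ∑ x, |if f x = y then P x - Q x else 0| :=
          Finset.sum_le_sum fun y _ => Finset.abs_sum_le_sum_abs _ _
      _ = ∑ y, ∑ x, if f x = y then |P x - Q x| else 0 := by
          apply Finset.sum_congr rfl
          intro y _
          apply Finset.sum_congr rfl
          intro x _
          split <;> simp
      _ = ∑ x, ∑ y, if f x = y then |P x - Q x| else 0 := Finset.sum_comm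
      _ = ∑ x, |P x - Q x| := by
          apply Finset.sum_congr rfl
          intro x _
          rw [Finset.sum_ite_eq]
          simp
  linarith

lemma isProb_push {X Y : Type*} [Fintype X] [Fintype Y] (f : X → Y) {P : X → ℝ}
    (hP : IsProb P) : IsProb (push f P) := by
  constructor
  · intro y
    apply Finset.sum_nonneg
    intro x _
    by_cases hfx : f x = y
    · rw [if_pos hfx]; exact hP.1 x
    · rw [if_neg hfx]
  · unfold push
    rw [Finset.sum_comm]
    have : ∀ x, ∑ y, (if f x = y then P x else 0) = P x := by
      intro x
      rw [Finset.sum_ite_eq]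
      simp
    rw [Finset.sum_congr rfl fun x _ => this x]
    exact hP.2

/-- The `t`-th marginal of an i.i.d. product is the single-letter distribution. -/
lemma push_prod {A : Type*} [Fintype A] {n : ℕ} (t : Fin n) {Pbar : A → ℝ}
    (hPbar : IsProb Pbar) :
    push (fun v : Fin n → A => v t) (fun v => ∏ i, Pbar (v i)) = Pbar := by
  funext a
  show (∑ v : Fin n → A, if v t = a then ∏ i, Pbar (v i) else 0) = Pbar a
  have hg : ∀ v : Fin n → A, (if v t = a then ∏ i, Pbar (v i) else 0)
      = ∏ i, (fun (i : Fin n) (x : A) =>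
          if i = t then (if x = a then Pbar x else 0) else Pbar x) i (v i) := by
    intro v
    rcases eq_or_ne (v t) a with h | h
    · rw [if_pos h]
      apply Finset.prod_congr rfl
      intro i _
      by_cases hit : i = t
      · subst hit; simp [h]
      · simp [hit]
    · rw [if_neg h]
      symm
      apply Finset.prod_eq_zero (Finset.mem_univ t)
      simp [h]
  have hswap := Fintype.prod_sum (fun (i : Fin n) (x : A) =>
      if i = t then (if x = a then Pbar x else 0) else Pbar x)
  rw [Finset.sum_congr rfl fun v _ => hg v, ← hswap]
  have hin : ∀ i : Fin n,
      (∑ x : A, (fun (i : Fin n) (x : A) =>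
        if i = t then (if x = a then Pbar x else 0) else Pbar x) i x)
      = if i = t then Pbar a else 1 := by
    intro i
    show (∑ x : A, if i = t then (if x = a then Pbar x else 0) else Pbar x)
        = if i = t then Pbar a else 1
    by_cases hit : i = t
    · simp [hit, Finset.sum_ite_eq']
    · simp [hit, hPbar.2]
  rw [Finset.prod_congr rfl fun i _ => hin i, Finset.prod_ite_eq']
  simp

/-- for a near-i.i.d. sequence and `T` uniform and independent,
`I(A_T; T) = H((1/n)∑_t P_t) − (1/n)∑_t H(P_t) ≤ f(ε)`. -/
theorem time_index_mutual_information_bound {A : Type*} [Fintype A] [Nonempty A]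
    {n : ℕ} (hn : 0 < n) (P : (Fin n → A) → ℝ) (Pbar : A → ℝ)
    (hP : IsProb P) (hPbar : IsProb Pbar) (ε : ℝ) (hε0 : 0 < ε) (hε : ε ≤ 1 / 2)
    (h : TV P (fun v => ∏ i, Pbar (v i)) ≤ ε) :
    Hent (fun a : A => (n : ℝ)⁻¹ * ∑ t : Fin n, push (fun v : Fin n → A => v t) P a)
        - (n : ℝ)⁻¹ * ∑ t : Fin n, Hent (push (fun v : Fin n → A => v t) P)
      ≤ 2 * Real.sqrt ε * (2 * Hent Pbar + ε * Real.log ((Fintype.card A : ℝ) / ε))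
          + 2 * (ε * Real.log ((Fintype.card A : ℝ) / ε))
          + ε * Real.log ((Fintype.card A : ℝ) / ε) := by
  classical
  have hnR : (0 : ℝ) < n := by exact_mod_cast hn
  have hcard1 : 1 ≤ (Fintype.card A : ℝ) := by exact_mod_cast Fintype.card_pos
  have hδ0 : 0 ≤ ε * Real.log ((Fintype.card A : ℝ) / ε) := by
    apply mul_nonneg (le_of_lt hε0)
    apply Real.log_nonneg
    rw [le_div_iff₀ hε0]
    linarith
  have hHb : 0 ≤ Hent Pbar := Hent_nonneg hPbar
  have hsq : 0 ≤ Real.sqrt ε := Real.sqrt_nonneg ε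
  rcases lt_or_ge (Fintype.card A : ℝ) 2 with hN2 | hN2
  · -- degenerate case: `card A = 1`, all entropies vanish
    have hall : ∀ a b : A, a = b := by
      have h2 : Fintype.card A < 2 := by exact_mod_cast hN2
      have hsub : Subsingleton A := Fintype.card_le_one_iff_subsingleton.mp (by omega)
      exact fun a b => Subsingleton.elim a b
    have hpush1 : ∀ (t : Fin n) (a : A), push (fun v : Fin n → A => v t) P a = 1 := by
      intro t a
      show (∑ v : Fin n → A, if v t = a then P v else 0) = 1
      have hpt : ∀ v : Fin n → A, (if v t = a then P v else 0) = P v := by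
        intro v; rw [if_pos (hall _ _)]
      rw [Finset.sum_congr rfl fun v _ => hpt v, hP.2]
    have hH0 : ∀ t : Fin n, Hent (push (fun v : Fin n → A => v t) P) = 0 := by
      intro t
      unfold Hent
      have hterm : ∀ a : A, push (fun v : Fin n → A => v t) P a
          * Real.log (push (fun v : Fin n → A => v t) P a) = 0 := by
        intro a; rw [hpush1 t a, Real.log_one, mul_zero]
      rw [Finset.sum_congr rfl fun a _ => hterm a]
      simp
    have hQ1 : (fun a : A => (n : ℝ)⁻¹ * ∑ t : Fin n, push (fun v : Fin n → A => v t) P a)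
        = fun _ : A => (1 : ℝ) := by
      funext a
      rw [Finset.sum_congr rfl fun t _ => hpush1 t a, Finset.sum_const, Finset.card_univ,
        Fintype.card_fin, nsmul_eq_mul, mul_one]
      field_simp
    have hQH : Hent (fun _ : A => (1 : ℝ)) = 0 := by
      unfold Hent; simp
    rw [hQ1, hQH, Finset.sum_congr rfl fun t _ => hH0 t, Finset.sum_const]
    simp only [smul_zero, mul_zero, zero_sub, neg_le]
    nlinarith [mul_nonneg hsq hHb, mul_nonneg hsq hδ0]
  · -- main case: `card A ≥ 2`
    have hPtprob : ∀ t : Fin n, IsProb (push (fun v : Fin n → A => v t) P) :=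
      fun t => isProb_push _ hP
    have hTVt : ∀ t : Fin n, TV (push (fun v : Fin n → A => v t) P) Pbar ≤ ε := by
      intro t
      have h1 := TV_push_le (fun v : Fin n → A => v t) P (fun v => ∏ i, Pbar (v i))
      rw [push_prod t hPbar] at h1
      exact h1.trans h
    set Q : A → ℝ :=
      fun a : A => (n : ℝ)⁻¹ * ∑ t : Fin n, push (fun v : Fin n → A => v t) P a with hQ_def
    have hQa : ∀ a : A,
        Q a = (n : ℝ)⁻¹ * ∑ t : Fin n, push (fun v : Fin n → A => v t) P a :=
      fun a => congrFun hQ_def a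
    have hQprob : IsProb Q := by
      constructor
      · intro a
        rw [hQa a]
        apply mul_nonneg (by positivity)
        exact Finset.sum_nonneg fun t _ => (hPtprob t).1 a
      · rw [Finset.sum_congr rfl fun a (_ : a ∈ Finset.univ) => hQa a, ← Finset.mul_sum,
          Finset.sum_comm, Finset.sum_congr rfl fun t (_ : t ∈ Finset.univ) => (hPtprob t).2,
          Finset.sum_const, Finset.card_univ, Fintype.card_fin, nsmul_eq_mul, mul_one]
        field_simp
    have hTVQ : TV Q Pbar ≤ ε := by
      unfold TV
      have hpt : ∀ a, |Q a - Pbar a|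
          ≤ (n : ℝ)⁻¹ * ∑ t : Fin n, |push (fun v : Fin n → A => v t) P a - Pbar a| := by
        intro a
        have he : Q a - Pbar a
            = (n : ℝ)⁻¹ * ∑ t : Fin n, (push (fun v : Fin n → A => v t) P a - Pbar a) := by
          rw [hQa a, Finset.sum_sub_distrib, Finset.sum_const, Finset.card_univ,
            Fintype.card_fin, nsmul_eq_mul, mul_sub]
          have h2 : (n : ℝ)⁻¹ * ((n : ℝ) * Pbar a) = Pbar a := by field_simp
          rw [h2]
        rw [he, abs_mul, abs_of_nonneg (by positivity : (0 : ℝ) ≤ (n : ℝ)⁻¹)]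
        exact mul_le_mul_of_nonneg_left (Finset.abs_sum_le_sum_abs _ _) (by positivity)
      have hsum : ∑ a, |Q a - Pbar a| ≤ 2 * ε := by
        calc ∑ a, |Q a - Pbar a|
            ≤ ∑ a, (n : ℝ)⁻¹ * ∑ t : Fin n, |push (fun v : Fin n → A => v t) P a - Pbar a| :=
              Finset.sum_le_sum fun a _ => hpt a
          _ = (n : ℝ)⁻¹ * ∑ t : Fin n, ∑ a, |push (fun v : Fin n → A => v t) P a - Pbar a| := by
              rw [← Finset.mul_sum, Finset.sum_comm]
          _ ≤ (n : ℝ)⁻¹ * ∑ _t : Fin n, 2 * ε := by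
              apply mul_le_mul_of_nonneg_left _ (by positivity)
              apply Finset.sum_le_sum
              intro t _
              have h3 := hTVt t
              unfold TV at h3
              linarith
          _ = 2 * ε := by
              rw [Finset.sum_const, Finset.card_univ, Fintype.card_fin, nsmul_eq_mul]
              field_simp
      linarith
    have hε1 : ε ≤ 1 := by linarith
    have hHQ : Hent Q - Hent Pbar ≤ ε + ε * Real.log ((Fintype.card A : ℝ) / ε) :=
      hent_sub_le hPbar hQprob hε0 hε1 (by rw [TV_comm]; exact hTVQ)
    have hHt : ∀ t : Fin n, Hent Pbar - Hent (push (fun v : Fin n → A => v t) P)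
        ≤ ε + ε * Real.log ((Fintype.card A : ℝ) / ε) :=
      fun t => hent_sub_le (hPtprob t) hPbar hε0 hε1 (hTVt t)
    set δ : ℝ := ε * Real.log ((Fintype.card A : ℝ) / ε) with hδ
    have havg : Hent Pbar - (ε + δ)
        ≤ (n : ℝ)⁻¹ * ∑ t : Fin n, Hent (push (fun v : Fin n → A => v t) P) := by
      have h1 : ∑ _t : Fin n, (Hent Pbar - (ε + δ))
          ≤ ∑ t : Fin n, Hent (push (fun v : Fin n → A => v t) P) :=
        Finset.sum_le_sum fun t _ => by linarith [hHt t]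
      rw [Finset.sum_const, Finset.card_univ, Fintype.card_fin, nsmul_eq_mul] at h1
      calc Hent Pbar - (ε + δ) = (n : ℝ)⁻¹ * ((n : ℝ) * (Hent Pbar - (ε + δ))) := by
            field_simp
        _ ≤ (n : ℝ)⁻¹ * ∑ t : Fin n, Hent (push (fun v : Fin n → A => v t) P) :=
            mul_le_mul_of_nonneg_left h1 (by positivity)
    have hkey : 2 ≤ Real.log ((Fintype.card A : ℝ) / ε) * (1 + 2 * Real.sqrt ε) := by
      have hlog : Real.log (2 / ε) ≤ Real.log ((Fintype.card A : ℝ) / ε) :=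
        Real.log_le_log (by positivity) (div_le_div_of_nonneg_right hN2 hε0.le)
      rcases le_or_gt ε (1 / 8) with h8 | h8
      · have h16 : (16 : ℝ) ≤ 2 / ε := by
          rw [le_div_iff₀ hε0]; linarith
        have hl16 : Real.log 16 ≤ Real.log (2 / ε) :=
          Real.log_le_log (by norm_num) h16
        have hl2 : (0.6931471803 : ℝ) < Real.log 2 := Real.log_two_gt_d9
        have h16e : Real.log 16 = 4 * Real.log 2 := by
          rw [show (16 : ℝ) = 2 ^ (4 : ℕ) by norm_num, Real.log_pow]
          norm_num
        have hg2 : 2 ≤ Real.log ((Fintype.card A : ℝ) / ε) := by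
          rw [h16e] at hl16
          linarith
        nlinarith [mul_nonneg (by linarith : (0 : ℝ) ≤ Real.log ((Fintype.card A : ℝ) / ε)) hsq]
      · have hsql : (0.35 : ℝ) ≤ Real.sqrt ε := by
          nlinarith [Real.sq_sqrt (le_of_lt hε0), Real.sqrt_nonneg ε]
        have h4 : (4 : ℝ) ≤ 2 / ε := by
          rw [le_div_iff₀ hε0]; linarith
        have hl4 : Real.log 4 ≤ Real.log (2 / ε) :=
          Real.log_le_log (by norm_num) h4
        have hl2 : (0.6931471803 : ℝ) < Real.log 2 := Real.log_two_gt_d9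
        have h4e : Real.log 4 = 2 * Real.log 2 := by
          rw [show (4 : ℝ) = 2 ^ (2 : ℕ) by norm_num, Real.log_pow]
          norm_num
        have hLlb : (1.38 : ℝ) ≤ Real.log ((Fintype.card A : ℝ) / ε) := by
          rw [h4e] at hl4
          linarith
        have hfac : (1.7 : ℝ) ≤ 1 + 2 * Real.sqrt ε := by linarith
        nlinarith [mul_le_mul hLlb hfac (by norm_num) (le_trans (by norm_num) hLlb)]
    have h2ε : 2 * ε ≤ δ * (1 + 2 * Real.sqrt ε) := by
      rw [hδ]
      calc 2 * ε = ε * 2 := by ring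
        _ ≤ ε * (Real.log ((Fintype.card A : ℝ) / ε) * (1 + 2 * Real.sqrt ε)) :=
          mul_le_mul_of_nonneg_left hkey (le_of_lt hε0)
        _ = ε * Real.log ((Fintype.card A : ℝ) / ε) * (1 + 2 * Real.sqrt ε) := by ring
    have hδ0' : 0 ≤ δ := hδ0
    nlinarith [mul_nonneg hsq hHb, mul_nonneg hsq hδ0', hHQ, havg]
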